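/- For X = [[0, B₁],[B₁', C₁]] and Y = [[0, B₂],[B₂', C₂]] in W and ε ∈ {1,−1}, one has Ω̃(X, Ĵ^ε Y) = Tr(B₁'·B₂) + Tr(B₂'·B₁) + 2ε·Tr(C₁·C₂), where Ω̃(X, Y) := Tr(ρ·(X·Y − Y·X)). In particular the form (X,Y) ↦ Ω̃(X, Ĵ^ε Y) is symmetric on W. -/
import Mathlib


open Matrix

/-- The standard complex structure matrix `J = [[0, -Id_n],[Id_n, 0]]`. -/
noncomputable def Jmat (n : ℕ) : Matrix (Fin n ⊕ Fin n) (Fin n ⊕ Fin n) ℝ :=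
  Matrix.fromBlocks 0 (-1) 1 0

/-- The matrix `ρ = [[0,0],[0,J]]` with block sizes `k` and `2n`. -/
noncomputable def rhoMat (k n : ℕ) :
    Matrix (Fin k ⊕ (Fin n ⊕ Fin n)) (Fin k ⊕ (Fin n ⊕ Fin n)) ℝ :=
  Matrix.fromBlocks 0 0 0 (Jmat n)

/-- The map `Ĵ^ε : [[A,B],[B',C]] ↦ [[0, −B·J],[J·B', ε·(J·C − C·J)/2]]`. -/
noncomputable def Jhat (k n : ℕ) (ε : ℝ)
    (X : Matrix (Fin k ⊕ (Fin n ⊕ Fin n)) (Fin k ⊕ (Fin n ⊕ Fin n)) ℝ) :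
    Matrix (Fin k ⊕ (Fin n ⊕ Fin n)) (Fin k ⊕ (Fin n ⊕ Fin n)) ℝ :=
  Matrix.fromBlocks 0 (-(X.toBlocks₁₂ * Jmat n)) (Jmat n * X.toBlocks₂₁)
    ((ε / 2) • (Jmat n * X.toBlocks₂₂ - X.toBlocks₂₂ * Jmat n))

/-- The bilinear form `Ω̃(X,Y) = Tr(ρ·(XY − YX))`. -/
noncomputable def OmegaForm (k n : ℕ)
    (X Y : Matrix (Fin k ⊕ (Fin n ⊕ Fin n)) (Fin k ⊕ (Fin n ⊕ Fin n)) ℝ) : ℝ :=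
  Matrix.trace (rhoMat k n * (X * Y - Y * X))


lemma trace_fromBlocks' {m n : Type*} [Fintype m] [Fintype n] [DecidableEq m] [DecidableEq n]
    (A : Matrix m m ℝ) (B : Matrix m n ℝ) (C : Matrix n m ℝ) (D : Matrix n n ℝ) :
    Matrix.trace (Matrix.fromBlocks A B C D) = Matrix.trace A + Matrix.trace D := by
  simp [Matrix.trace, Fintype.sum_sum_type, Matrix.fromBlocks, Matrix.diag]

lemma fromBlocks_sub' {l m : Type*} (A A' : Matrix l l ℝ) (B B' : Matrix l m ℝ)
    (C C' : Matrix m l ℝ) (D D' : Matrix m m ℝ) :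
    Matrix.fromBlocks A B C D - Matrix.fromBlocks A' B' C' D' =
      Matrix.fromBlocks (A - A') (B - B') (C - C') (D - D') := by
  ext (i | i) (j | j) <;> simp [Matrix.fromBlocks]

lemma omega_key (k n : ℕ) (ε : ℝ)
    (B₁ B₂ : Matrix (Fin k) (Fin n ⊕ Fin n) ℝ)
    (B₁' B₂' : Matrix (Fin n ⊕ Fin n) (Fin k) ℝ)
    (C₁ C₂ : Matrix (Fin n ⊕ Fin n) (Fin n ⊕ Fin n) ℝ)
    (hC₁ : C₁ * Jmat n + Jmat n * C₁ = 0) (hC₂ : C₂ * Jmat n + Jmat n * C₂ = 0) :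
    OmegaForm k n (Matrix.fromBlocks 0 B₁ B₁' C₁)
        (Jhat k n ε (Matrix.fromBlocks 0 B₂ B₂' C₂)) =
      Matrix.trace (B₁' * B₂) + Matrix.trace (B₂' * B₁) +
        2 * ε * Matrix.trace (C₁ * C₂) := by
  have hJC₂ : Jmat n * C₂ = -(C₂ * Jmat n) :=
    eq_neg_of_add_eq_zero_left (by rw [add_comm]; exact hC₂)
  have hF : (ε / 2) • (Jmat n * C₂ - C₂ * Jmat n) = (-ε) • (C₂ * Jmat n) := by
    rw [hJC₂]; module
  simp only [OmegaForm, Jhat, rhoMat, Matrix.toBlocks_fromBlocks₁₂,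
    Matrix.toBlocks_fromBlocks₂₁, Matrix.toBlocks_fromBlocks₂₂, hF,
    Matrix.fromBlocks_multiply, fromBlocks_sub', trace_fromBlocks']
  have hJ2 : Jmat n * Jmat n = -1 := by
    simp [Jmat, Matrix.fromBlocks_multiply, ← Matrix.fromBlocks_one, Matrix.fromBlocks_neg]
  have t1 : Matrix.trace (Jmat n * (B₁' * (B₂ * Jmat n))) = - Matrix.trace (B₁' * B₂) := by
    rw [Matrix.trace_mul_comm]
    simp only [Matrix.mul_assoc, hJ2]
    simp
  have t2 : Matrix.trace (Jmat n * (C₁ * (C₂ * Jmat n))) = - Matrix.trace (C₁ * C₂) := by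
    rw [Matrix.trace_mul_comm]
    simp only [Matrix.mul_assoc, hJ2]
    simp
  have t3 : Matrix.trace (Jmat n * (Jmat n * (B₂' * B₁))) = - Matrix.trace (B₂' * B₁) := by
    rw [← Matrix.mul_assoc, hJ2]
    simp
  have hJC₁ : Jmat n * C₁ = -(C₁ * Jmat n) :=
    eq_neg_of_add_eq_zero_left (by rw [add_comm]; exact hC₁)
  have t4 : Matrix.trace (Jmat n * (C₂ * (Jmat n * C₁))) = Matrix.trace (C₁ * C₂) := by
    rw [hJC₁, Matrix.mul_neg, Matrix.mul_neg, Matrix.trace_neg, Matrix.trace_mul_comm]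
    simp only [Matrix.mul_assoc, hJ2]
    simp [Matrix.trace_mul_comm C₂ C₁]
  simp only [Matrix.mul_zero, Matrix.zero_mul, zero_add, add_zero, sub_zero, zero_sub,
    Matrix.mul_neg, Matrix.neg_mul, mul_smul_comm, smul_mul_assoc, Matrix.mul_sub,
    Matrix.mul_add, Matrix.trace_add, Matrix.trace_sub, Matrix.trace_neg, Matrix.trace_smul,
    Matrix.trace_zero, smul_eq_mul, Matrix.mul_assoc]
  rw [t1, t2, t3, t4]
  ring

theorem metric_formula_and_symmetry (k n : ℕ) (hk : 0 < k) (hn : 0 < n)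
    (ε : ℝ) (hε : ε = 1 ∨ ε = -1)
    (B₁ B₂ : Matrix (Fin k) (Fin n ⊕ Fin n) ℝ)
    (B₁' B₂' : Matrix (Fin n ⊕ Fin n) (Fin k) ℝ)
    (C₁ C₂ : Matrix (Fin n ⊕ Fin n) (Fin n ⊕ Fin n) ℝ)
    (hC₁ : C₁ * Jmat n + Jmat n * C₁ = 0) (hC₂ : C₂ * Jmat n + Jmat n * C₂ = 0) :
    OmegaForm k n (Matrix.fromBlocks 0 B₁ B₁' C₁)
        (Jhat k n ε (Matrix.fromBlocks 0 B₂ B₂' C₂)) =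
      Matrix.trace (B₁' * B₂) + Matrix.trace (B₂' * B₁) +
        2 * ε * Matrix.trace (C₁ * C₂) ∧
    OmegaForm k n (Matrix.fromBlocks 0 B₁ B₁' C₁)
        (Jhat k n ε (Matrix.fromBlocks 0 B₂ B₂' C₂)) =
      OmegaForm k n (Matrix.fromBlocks 0 B₂ B₂' C₂)
        (Jhat k n ε (Matrix.fromBlocks 0 B₁ B₁' C₁)) := by
  refine ⟨omega_key k n ε B₁ B₂ B₁' B₂' C₁ C₂ hC₁ hC₂, ?_⟩
  rw [omega_key k n ε B₁ B₂ B₁' B₂' C₁ C₂ hC₁ hC₂,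
    omega_key k n ε B₂ B₁ B₂' B₁' C₂ C₁ hC₂ hC₁, Matrix.trace_mul_comm C₂ C₁]
  ring
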